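/- Let d > 0, let r:[0,d]→(0,∞) be any function, and let ρ ∈ (0, 1/2). Then there exists a countable (possibly finite) set of points {t_i} ⊆ [0,d] such that the open intervals (t_i − r(t_i), t_i + r(t_i)) are pairwise disjoint and ρ·d ≤ Σ_i 2·r(t_i). (This is the one-dimensional form of the covering lemma—Lemma 5.2 of Topping's Ricci-flow diameter paper—used in the proof of the paper's main theorem: a geodesic of length d covered by the balls {B(z, r(z))} admits a countable disjoint subfamily of balls covering at least a fraction ρ of it.) -/

import Mathlib

open Set

/-- **One-dimensional covering lemma.** Let `d > 0`, let `r : [0,d] → (0,∞)` be any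
function, and let `ρ ∈ (0, 1/2)`. Then there is a countable (possibly finite) set of
points `{t_i} ⊆ [0,d]` such that the open intervals `(t_i - r(t_i), t_i + r(t_i))` are
pairwise disjoint and `ρ d ≤ Σ_i 2 r(t_i)`. -/
theorem covering_lemma_interval
    (d : ℝ) (hd : 0 < d) (r : ℝ → ℝ) (hr : ∀ t ∈ Set.Icc (0 : ℝ) d, 0 < r t)
    (ρ : ℝ) (hρ : ρ ∈ Set.Ioo (0 : ℝ) (1 / 2)) :
    ∃ s : Set ℝ, s.Countable ∧ s ⊆ Set.Icc (0 : ℝ) d ∧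
      s.PairwiseDisjoint (fun t => Set.Ioo (t - r t) (t + r t)) ∧
      ENNReal.ofReal (ρ * d) ≤ ∑' t : s, ENNReal.ofReal (2 * r t) := by
  obtain ⟨hρ0, hρ2⟩ := hρ
  by_cases hbig : ∃ t ∈ Set.Icc (0 : ℝ) d, ρ * d ≤ 2 * r t
  · obtain ⟨t, ht, hbig⟩ := hbig
    refine ⟨{t}, countable_singleton t, by simpa using ht,
      pairwiseDisjoint_singleton _ _, ?_⟩
    rw [show (∑' (t_1 : ↑({t} : Set ℝ)), ENNReal.ofReal (2 * r ↑t_1)) = ENNReal.ofReal (2 * r t) from tsum_singleton t (fun x => ENNReal.ofReal (2 * r x))]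
    exact ENNReal.ofReal_le_ofReal hbig
  · push_neg at hbig
    set τ : ℝ := 1 / ρ - 1 with hτdef
    have h2ρ : 2 < 1 / ρ := by
      rw [lt_div_iff₀ hρ0]; linarith
    have hτ : 1 < τ := by simp only [hτdef]; linarith
    obtain ⟨u, hut, hdisj, hcov⟩ := Vitali.exists_disjoint_subfamily_covering_enlargement
      (fun t => Set.Ioo (t - r t) (t + r t)) (Set.Icc 0 d) r τ hτ
      (fun a ha => (hr a ha).le) (ρ * d / 2) (fun a ha => by linarith [hbig a ha])
      (fun a ha => nonempty_Ioo.2 (by linarith [hr a ha]))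
    have hcnt : u.Countable := hdisj.countable_of_isOpen (fun i _ => isOpen_Ioo)
      (fun i hi => nonempty_Ioo.2 (by linarith [hr i (hut hi)]))
    refine ⟨u, hcnt, hut, hdisj, ?_⟩
    have hsub : Set.Icc (0 : ℝ) d ⊆
        ⋃ b ∈ u, Set.Ioo (b - (τ + 1) * r b) (b + (τ + 1) * r b) := by
      intro a ha
      obtain ⟨b, hb, ⟨x, hx1, hx2⟩, hle⟩ := hcov a ha
      have hrb := hr b (hut hb)
      refine mem_biUnion hb ?_
      simp only [mem_Ioo] at hx1 hx2 ⊢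
      constructor <;> nlinarith [hx1.1, hx1.2, hx2.1, hx2.2]
    have h1 : ENNReal.ofReal d ≤
        ENNReal.ofReal (1 / ρ) * ∑' b : u, ENNReal.ofReal (2 * r b) := by
      calc ENNReal.ofReal d = MeasureTheory.volume (Set.Icc (0 : ℝ) d) := by
            rw [Real.volume_Icc, sub_zero]
        _ ≤ MeasureTheory.volume (⋃ b ∈ u,
              Set.Ioo (b - (τ + 1) * r b) (b + (τ + 1) * r b)) :=
            MeasureTheory.measure_mono hsub
        _ ≤ ∑' b : u, MeasureTheory.volume
              (Set.Ioo ((b : ℝ) - (τ + 1) * r b) (b + (τ + 1) * r b)) :=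
            MeasureTheory.measure_biUnion_le _ hcnt _
        _ = ∑' b : u, ENNReal.ofReal (1 / ρ) * ENNReal.ofReal (2 * r b) := by
            congr 1; funext b
            rw [Real.volume_Ioo, ← ENNReal.ofReal_mul (by positivity)]
            congr 1
            simp only [hτdef]; ring
        _ = ENNReal.ofReal (1 / ρ) * ∑' b : u, ENNReal.ofReal (2 * r b) :=
            ENNReal.tsum_mul_left
    calc ENNReal.ofReal (ρ * d) = ENNReal.ofReal ρ * ENNReal.ofReal d :=
          ENNReal.ofReal_mul hρ0.le
      _ ≤ ENNReal.ofReal ρ * (ENNReal.ofReal (1 / ρ) *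
            ∑' b : u, ENNReal.ofReal (2 * r b)) := mul_le_mul_right h1 _
      _ = (ENNReal.ofReal ρ * ENNReal.ofReal (1 / ρ)) *
            ∑' b : u, ENNReal.ofReal (2 * r b) := (mul_assoc _ _ _).symm
      _ = ∑' b : u, ENNReal.ofReal (2 * r b) := by
          rw [← ENNReal.ofReal_mul hρ0.le, mul_one_div_cancel hρ0.ne',
            ENNReal.ofReal_one, one_mul]
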